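/- Let C be a Minkowski centered convex body in ℝ^n with 0 in its interior, and s = s(C). Then (C − C)/2 ⊆ ((s+1)/2)·((C° − C°)/2)°. Moreover, for every s ∈ [1, n] there exists a Minkowski centered convex body C in ℝ^n with s(C) = s for which this containment is optimal, i.e., (C − C)/2 ⊂^opt ((s+1)/2)·((C° − C°)/2)°. -/

import Mathlib

open Pointwise RealInnerProductSpace

variable {E : Type*} [NormedAddCommGroup E] [InnerProductSpace ℝ E]

/-- `K` is optimally contained in `C`: `K ⊆ C` and there is no `ρ ∈ [0,1)` and
translation `t` with `K ⊆ ρ • C + {t}`. -/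
def OptCont (K C : Set E) : Prop :=
  K ⊆ C ∧ ¬∃ ρ : ℝ, 0 ≤ ρ ∧ ρ < 1 ∧ ∃ t : E, K ⊆ ρ • C + {t}

/-- The polar set `C° = {a | ∀ x ∈ C, ⟪a,x⟫ ≤ 1}`. -/
def polarSet (C : Set E) : Set E := {a : E | ∀ x ∈ C, ⟪a, x⟫ ≤ 1}

/-- The Minkowski asymmetry of `C`. -/
noncomputable def minkAsym (C : Set E) : ℝ :=
  sInf {ρ : ℝ | 0 < ρ ∧ ∃ c : E, C - {c} ⊆ ρ • ({c} - C)}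

/-- `C` is Minkowski centered if `C ⊆ s(C) • (-C)`. -/
def MinkCentered (C : Set E) : Prop := C ⊆ minkAsym C • (-C)

lemma minkAsym_nonneg (C : Set E) : 0 ≤ minkAsym C :=
  Real.sInf_nonneg fun _ h => le_of_lt h.1

lemma part1_general (C : Set E) (hcent : MinkCentered C) :
    (2:ℝ)⁻¹ • (C + -C) ⊆
      ((minkAsym C + 1) / 2) • polarSet ((2:ℝ)⁻¹ • (polarSet C + -polarSet C)) := by
  set s := minkAsym C with hsdef
  have hs0 : 0 ≤ s := minkAsym_nonneg C
  have hl : 0 < (s + 1) / 2 := by linarith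
  rintro x hx
  rw [Set.mem_smul_set] at hx
  obtain ⟨y, hy, rfl⟩ := hx
  rw [Set.mem_add] at hy
  obtain ⟨u, hu, v', hv', rfl⟩ := hy
  rw [Set.mem_neg] at hv'
  rw [Set.mem_smul_set]
  refine ⟨((s + 1) / 2)⁻¹ • (2:ℝ)⁻¹ • (u + v'), ?_, by rw [smul_inv_smul₀ hl.ne']⟩
  intro d hd
  rw [Set.mem_smul_set] at hd
  obtain ⟨w, hw, rfl⟩ := hd
  rw [Set.mem_add] at hw
  obtain ⟨b, hb, c', hc', rfl⟩ := hw
  rw [Set.mem_neg] at hc'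
  -- bounds
  have h1 : ⟪u, b⟫ ≤ 1 := by rw [real_inner_comm]; exact hb u hu
  have h2 : ⟪v', c'⟫ ≤ 1 := by
    have := hc' (-v') hv'
    rw [real_inner_comm] at this
    simpa using this
  have h3 : ⟪u, c'⟫ ≤ s := by
    obtain ⟨z, hz, hzz⟩ := hcent hu
    have hzz' : s • z = u := hzz
    rw [Set.mem_neg] at hz
    have hzc : ⟪z, c'⟫ ≤ 1 := by
      rw [← inner_neg_neg, real_inner_comm]; exact hc' (-z) hz
    calc ⟪u, c'⟫ = s * ⟪z, c'⟫ := by rw [← hzz', real_inner_smul_left]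
    _ ≤ s * 1 := mul_le_mul_of_nonneg_left hzc hs0
    _ = s := mul_one s
  have h4 : ⟪v', b⟫ ≤ s := by
    obtain ⟨z, hz, hzz⟩ := hcent hv'
    have hzz' : s • z = -v' := hzz
    rw [Set.mem_neg] at hz
    have hzc : ⟪-z, b⟫ ≤ 1 := by rw [real_inner_comm]; exact hb (-z) hz
    have hv'' : v' = s • (-z) := by rw [smul_neg, hzz', neg_neg]
    calc ⟪v', b⟫ = s * ⟪-z, b⟫ := by rw [hv'', real_inner_smul_left]
    _ ≤ s * 1 := mul_le_mul_of_nonneg_left hzc hs0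
    _ = s := mul_one s
  rw [real_inner_smul_left, real_inner_smul_left, real_inner_smul_right,
    inner_add_left, inner_add_right, inner_add_right]
  rw [inv_mul_le_iff₀ hl]
  have h20 : (0:ℝ) < 2⁻¹ := by norm_num
  nlinarith [h1, h2, h3, h4]

/-! ### Part 2: the tight example `C = T ∩ s·(-T)` for a simplex `T` -/

/-- Convenience constructor for points of Euclidean space. -/
noncomputable def pt (n : ℕ) (f : Fin n → ℝ) : EuclideanSpace ℝ (Fin n) :=
  (WithLp.equiv 2 _).symm f

lemma pt_apply (n : ℕ) (f : Fin n → ℝ) (i : Fin n) : pt n f i = f i := rfl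

/-- The body `T ∩ s(-T)` where `T` is a centered simplex. -/
def Cb (n : ℕ) (s : ℝ) : Set (EuclideanSpace ℝ (Fin n)) :=
  {x | (∀ i, x i ≤ 1) ∧ (∀ i, -s ≤ x i) ∧ -1 ≤ ∑ i, x i ∧ ∑ i, x i ≤ s}

lemma coord_abs_le_norm {n : ℕ} (x : EuclideanSpace ℝ (Fin n)) (i : Fin n) :
    |x i| ≤ ‖x‖ := by
  rw [EuclideanSpace.norm_eq]
  rw [Real.le_sqrt (abs_nonneg _) (by positivity)]
  have : |x i| ^ 2 = ‖x i‖ ^ 2 := by rw [Real.norm_eq_abs]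
  rw [this]
  exact Finset.single_le_sum (f := fun j => ‖x j‖ ^ 2) (fun j _ => by positivity) (Finset.mem_univ i)

lemma sum_ite_const {n : ℕ} (i0 : Fin n) (A B : ℝ) :
    ∑ j : Fin n, (if j = i0 then A else B) = A + ((n : ℝ) - 1) * B := by
  have h1 : ∑ j : Fin n, (if j = i0 then A else B)
      = ∑ j : Fin n, (B + if j = i0 then A - B else 0) := by
    apply Finset.sum_congr rfl
    intro j _
    by_cases hj : j = i0 <;> simp [hj]
  rw [h1, Finset.sum_add_distrib, Finset.sum_const, Finset.card_univ, Fintype.card_fin,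
    nsmul_eq_mul]
  have h2 : ∑ j : Fin n, (if j = i0 then A - B else 0) = A - B := by
    rw [Finset.sum_ite_eq' Finset.univ i0 (fun _ => A - B)]
    simp
  rw [h2]
  have hn : 1 ≤ n := Nat.one_le_iff_ne_zero.2 (by rintro rfl; exact i0.elim0)
  have : ((n : ℝ)) = ((n - 1 : ℕ) : ℝ) + 1 := by
    rw [Nat.cast_sub hn]; ring
  ring

lemma Cb_convex (n : ℕ) (s : ℝ) : Convex ℝ (Cb n s) := by
  rintro x hx y hy a b ha hb hab
  have hco : ∀ i, (a • x + b • y) i = a * x i + b * y i := fun i => by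
    simp [PiLp.add_apply, PiLp.smul_apply, smul_eq_mul]
  have hsum : ∑ i, (a • x + b • y) i = a * (∑ i, x i) + b * (∑ i, y i) := by
    simp only [hco]
    rw [Finset.sum_add_distrib, ← Finset.mul_sum, ← Finset.mul_sum]
  have hs' : ∀ r : ℝ, a * r + b * r = r := fun r => by rw [← add_mul, hab, one_mul]
  refine ⟨fun i => ?_, fun i => ?_, ?_, ?_⟩
  · rw [hco i]
    linarith [mul_le_mul_of_nonneg_left (hx.1 i) ha, mul_le_mul_of_nonneg_left (hy.1 i) hb,
      hs' 1]
  · rw [hco i]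
    linarith [mul_le_mul_of_nonneg_left (hx.2.1 i) ha, mul_le_mul_of_nonneg_left (hy.2.1 i) hb,
      hs' (-s)]
  · rw [hsum]
    linarith [mul_le_mul_of_nonneg_left hx.2.2.1 ha, mul_le_mul_of_nonneg_left hy.2.2.1 hb,
      hs' (-1)]
  · rw [hsum]
    linarith [mul_le_mul_of_nonneg_left hx.2.2.2 ha, mul_le_mul_of_nonneg_left hy.2.2.2 hb,
      hs' s]

lemma Cb_isClosed (n : ℕ) (s : ℝ) : IsClosed (Cb n s) := by
  have hrepr : Cb n s = (⋂ i, {x : EuclideanSpace ℝ (Fin n) | x i ≤ 1}) ∩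
      ((⋂ i, {x : EuclideanSpace ℝ (Fin n) | -s ≤ x i}) ∩
        ({x : EuclideanSpace ℝ (Fin n) | -1 ≤ ∑ i, x i} ∩
          {x : EuclideanSpace ℝ (Fin n) | ∑ i, x i ≤ s})) := by
    ext x
    simp only [Cb, Set.mem_inter_iff, Set.mem_iInter, Set.mem_setOf_eq]
  rw [hrepr]
  have hsumcont : Continuous (fun x : EuclideanSpace ℝ (Fin n) => ∑ i, x i) :=
    continuous_finset_sum _ (fun i _ => (EuclideanSpace.proj i).continuous)
  refine IsClosed.inter (isClosed_iInter fun i => ?_)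
    (IsClosed.inter (isClosed_iInter fun i => ?_) (IsClosed.inter ?_ ?_))
  · exact isClosed_le (EuclideanSpace.proj i).continuous continuous_const
  · exact isClosed_le continuous_const (EuclideanSpace.proj i).continuous
  · exact isClosed_le continuous_const hsumcont
  · exact isClosed_le hsumcont continuous_const

lemma Cb_isCompact (n : ℕ) (s : ℝ) (hs1 : 1 ≤ s) : IsCompact (Cb n s) := by
  apply Metric.isCompact_of_isClosed_isBounded (Cb_isClosed n s)
  rw [isBounded_iff_forall_norm_le]
  refine ⟨s * Real.sqrt n, fun x hx => ?_⟩
  have hbound : ∀ i, ‖x i‖ ^ 2 ≤ s ^ 2 := by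
    intro i
    have h1 : |x i| ≤ s := abs_le.2 ⟨hx.2.1 i, le_trans (hx.1 i) hs1⟩
    rw [Real.norm_eq_abs]
    nlinarith [abs_nonneg (x i)]
  rw [EuclideanSpace.norm_eq]
  have h2 : ∑ i : Fin n, ‖x i‖ ^ 2 ≤ (n : ℝ) * s ^ 2 := by
    calc ∑ i : Fin n, ‖x i‖ ^ 2 ≤ ∑ _i : Fin n, s ^ 2 :=
          Finset.sum_le_sum fun i _ => hbound i
    _ = (n : ℝ) * s ^ 2 := by
        rw [Finset.sum_const, Finset.card_univ, Fintype.card_fin, nsmul_eq_mul]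
  calc Real.sqrt (∑ i : Fin n, ‖x i‖ ^ 2) ≤ Real.sqrt ((n : ℝ) * s ^ 2) :=
        Real.sqrt_le_sqrt h2
  _ = s * Real.sqrt n := by
      rw [Real.sqrt_mul (by positivity), Real.sqrt_sq (by linarith)]
      ring

lemma Cb_ball_subset (n : ℕ) (s : ℝ) (hs1 : 1 ≤ s) :
    Metric.ball (0 : EuclideanSpace ℝ (Fin n)) ((n : ℝ) + 1)⁻¹ ⊆ Cb n s := by
  intro x hx
  rw [mem_ball_zero_iff] at hx
  have hn0 : (0:ℝ) < (n : ℝ) + 1 := by positivity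
  have hr1 : ((n : ℝ) + 1)⁻¹ ≤ 1 := by
    rw [inv_le_one_iff₀]; right; linarith [Nat.cast_nonneg (α := ℝ) n]
  have hcoord : ∀ i, |x i| < 1 := fun i =>
    lt_of_le_of_lt (coord_abs_le_norm x i) (lt_of_lt_of_le hx hr1)
  have hsum : |∑ i, x i| ≤ 1 := by
    calc |∑ i, x i| ≤ ∑ i, |x i| := Finset.abs_sum_le_sum_abs _ _
    _ ≤ ∑ _i : Fin n, ‖x‖ := Finset.sum_le_sum fun i _ => coord_abs_le_norm x i
    _ = (n : ℝ) * ‖x‖ := by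
        rw [Finset.sum_const, Finset.card_univ, Fintype.card_fin, nsmul_eq_mul]
    _ ≤ (n : ℝ) * ((n : ℝ) + 1)⁻¹ := by
        apply mul_le_mul_of_nonneg_left hx.le (Nat.cast_nonneg n)
    _ ≤ 1 := by
        rw [← div_eq_mul_inv]
        apply div_le_one_of_le₀ (by linarith) (by linarith)
  have habs := abs_le.1 hsum
  refine ⟨fun i => le_of_lt (lt_of_le_of_lt (le_abs_self _) (hcoord i)),
    fun i => ?_, by linarith [habs.1], by linarith [habs.2]⟩
  have := (abs_le.1 (hcoord i).le).1
  linarith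

lemma delta_facts (n : ℕ) (s : ℝ) (hs1 : 1 ≤ s) (hsn : s ≤ n) :
    0 ≤ (s - 1) / ((n : ℝ) - 1) ∧ (s - 1) / ((n : ℝ) - 1) ≤ 1 ∧
      (s - 1) / ((n : ℝ) - 1) * ((n : ℝ) - 1) = s - 1 := by
  by_cases h : (n : ℝ) = 1
  · have hs : s = 1 := le_antisymm (h ▸ hsn) hs1
    simp [h, hs]
  · have hn1 : (1 : ℝ) ≤ n := le_trans hs1 hsn
    have hn1' : (0 : ℝ) < (n : ℝ) - 1 := by
      rcases lt_or_eq_of_le hn1 with h' | h'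
      · linarith
      · exact absurd h'.symm h
    exact ⟨div_nonneg (by linarith) hn1'.le,
      (div_le_one hn1').2 (by linarith),
      div_mul_cancel₀ _ hn1'.ne'⟩

lemma vpt_mem (n : ℕ) (s : ℝ) (hs1 : 1 ≤ s) (hsn : s ≤ (n : ℝ)) (i : Fin n) :
    pt n (fun j => if j = i then -s else (s - 1) / ((n : ℝ) - 1)) ∈ Cb n s := by
  obtain ⟨hδ0, hδ1, hδm⟩ := delta_facts n s hs1 hsn
  have hsum : ∑ j : Fin n, pt n (fun j => if j = i then -s else (s - 1) / ((n : ℝ) - 1)) j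
      = -1 := by
    simp only [pt_apply]
    rw [sum_ite_const]
    nlinarith [hδm]
  refine ⟨fun j => ?_, fun j => ?_, by rw [hsum], by rw [hsum]; linarith⟩ <;>
    rw [pt_apply] <;> by_cases hj : j = i <;> simp [hj] <;> linarith

lemma upt_mem (n : ℕ) (s : ℝ) (hs1 : 1 ≤ s) (hsn : s ≤ (n : ℝ)) (i : Fin n) :
    pt n (fun j => if j = i then 1 else (s - 1) / ((n : ℝ) - 1)) ∈ Cb n s := by
  obtain ⟨hδ0, hδ1, hδm⟩ := delta_facts n s hs1 hsn
  have hsum : ∑ j : Fin n, pt n (fun j => if j = i then 1 else (s - 1) / ((n : ℝ) - 1)) j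
      = s := by
    simp only [pt_apply]
    rw [sum_ite_const]
    nlinarith [hδm]
  refine ⟨fun j => ?_, fun j => ?_, by rw [hsum]; linarith, by rw [hsum]⟩ <;>
    rw [pt_apply] <;> by_cases hj : j = i <;> simp [hj] <;> linarith

lemma wpt_mem (n : ℕ) (s : ℝ) (hs1 : 1 ≤ s) (hsn : s ≤ (n : ℝ)) :
    pt n (fun _ => s / (n : ℝ)) ∈ Cb n s := by
  have hn0 : (0 : ℝ) < n := by linarith
  have hsum : ∑ j : Fin n, pt n (fun _ => s / (n : ℝ)) j = s := by
    simp only [pt_apply]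
    rw [Finset.sum_const, Finset.card_univ, Fintype.card_fin, nsmul_eq_mul]
    field_simp
  refine ⟨fun j => ?_, fun j => ?_, by rw [hsum]; linarith, by rw [hsum]⟩ <;> rw [pt_apply]
  · rw [div_le_one hn0]; exact hsn
  · have : 0 ≤ s / (n : ℝ) := by positivity
    linarith

lemma Cb_neg_inv_smul_mem (n : ℕ) (s : ℝ) (hs1 : 1 ≤ s) {x : EuclideanSpace ℝ (Fin n)}
    (hx : x ∈ Cb n s) : -(s⁻¹ • x) ∈ Cb n s := by
  have hs0 : (0 : ℝ) < s := by linarith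
  have hss : s * s⁻¹ = 1 := mul_inv_cancel₀ hs0.ne'
  have hsinv0 : (0 : ℝ) ≤ s⁻¹ := by positivity
  have hsinv1 : s⁻¹ ≤ 1 := by nlinarith
  have hco : ∀ i, (-(s⁻¹ • x)) i = -(s⁻¹ * x i) := fun i => by
    simp [PiLp.neg_apply, PiLp.smul_apply, smul_eq_mul]
  have hsum : ∑ i, (-(s⁻¹ • x)) i = -(s⁻¹ * ∑ i, x i) := by
    simp only [hco]
    rw [Finset.sum_neg_distrib, ← Finset.mul_sum]
  refine ⟨fun i => ?_, fun i => ?_, ?_, ?_⟩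
  · rw [hco i]
    nlinarith [mul_le_mul_of_nonneg_left (hx.2.1 i) hsinv0]
  · rw [hco i]
    nlinarith [mul_le_mul_of_nonneg_left (hx.1 i) hsinv0]
  · rw [hsum]
    nlinarith [mul_le_mul_of_nonneg_left hx.2.2.2 hsinv0]
  · rw [hsum]
    nlinarith [mul_le_mul_of_nonneg_left hx.2.2.1 hsinv0]

lemma Cb_subset_smul_neg (n : ℕ) (s : ℝ) (hs1 : 1 ≤ s) : Cb n s ⊆ s • (-Cb n s) := by
  intro x hx
  have hs0 : (0 : ℝ) < s := by linarith
  rw [Set.mem_smul_set]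
  exact ⟨s⁻¹ • x, Set.mem_neg.2 (Cb_neg_inv_smul_mem n s hs1 hx),
    smul_inv_smul₀ hs0.ne' x⟩

lemma Cb_asym_mem (n : ℕ) (s : ℝ) (hs1 : 1 ≤ s) :
    s ∈ {ρ : ℝ | 0 < ρ ∧ ∃ c : EuclideanSpace ℝ (Fin n),
      Cb n s - {c} ⊆ ρ • ({c} - Cb n s)} := by
  have hs0 : (0 : ℝ) < s := by linarith
  refine ⟨hs0, 0, fun z hz => ?_⟩
  rw [Set.mem_sub] at hz
  obtain ⟨a, ha, b, hb, hab⟩ := hz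
  rw [Set.mem_singleton_iff] at hb
  subst hb
  rw [Set.mem_smul_set]
  refine ⟨0 - (-(s⁻¹ • a)), Set.mem_sub.2 ⟨0, rfl, -(s⁻¹ • a),
    Cb_neg_inv_smul_mem n s hs1 ha, rfl⟩, ?_⟩
  rw [← hab, zero_sub, neg_neg, smul_inv_smul₀ hs0.ne', sub_zero]

lemma Cb_asym_lb (n : ℕ) (s : ℝ) (hs1 : 1 ≤ s) (hsn : s ≤ (n : ℝ)) :
    ∀ ρ ∈ {ρ : ℝ | 0 < ρ ∧ ∃ c : EuclideanSpace ℝ (Fin n),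
      Cb n s - {c} ⊆ ρ • ({c} - Cb n s)}, s ≤ ρ := by
  rintro ρ ⟨hρ0, c, hsub⟩
  have key : ∀ x ∈ Cb n s, ∃ y ∈ Cb n s, x - c = ρ • (c - y) := by
    intro x hx
    have hm := hsub (Set.sub_mem_sub hx (Set.mem_singleton c))
    rw [Set.mem_smul_set] at hm
    obtain ⟨z, hz, hzz⟩ := hm
    rw [Set.mem_sub] at hz
    obtain ⟨a, ha, y, hy, hay⟩ := hz
    rw [Set.mem_singleton_iff] at ha
    subst ha
    exact ⟨y, hy, by rw [← hzz, hay]⟩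
  have keyA : ∀ i : Fin n, (1 + ρ) * c i + s ≤ ρ := by
    intro i
    obtain ⟨y, hy, heq⟩ := key _ (vpt_mem n s hs1 hsn i)
    have hci := congrArg (fun z : EuclideanSpace ℝ (Fin n) => z i) heq
    simp only [PiLp.sub_apply, PiLp.smul_apply, smul_eq_mul, pt_apply, eq_self_iff_true, if_true] at hci
    nlinarith [mul_le_mul_of_nonneg_left (hy.1 i) hρ0.le, hci]
  have sumA : (1 + ρ) * (∑ i, c i) + (n : ℝ) * s ≤ (n : ℝ) * ρ := by
    calc (1 + ρ) * (∑ i, c i) + (n : ℝ) * s = ∑ i : Fin n, ((1 + ρ) * c i + s) := by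
          rw [Finset.sum_add_distrib, ← Finset.mul_sum, Finset.sum_const,
            Finset.card_univ, Fintype.card_fin, nsmul_eq_mul]
    _ ≤ ∑ _i : Fin n, ρ := Finset.sum_le_sum fun i _ => keyA i
    _ = (n : ℝ) * ρ := by
          rw [Finset.sum_const, Finset.card_univ, Fintype.card_fin, nsmul_eq_mul]
  have keyB : s - (1 + ρ) * (∑ i, c i) ≤ ρ := by
    obtain ⟨y, hy, heq⟩ := key _ (wpt_mem n s hs1 hsn)
    have hsumeq := congrArg (fun z : EuclideanSpace ℝ (Fin n) => ∑ i, z i) heq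
    simp only [PiLp.sub_apply, PiLp.smul_apply, smul_eq_mul, pt_apply] at hsumeq
    rw [Finset.sum_sub_distrib, ← Finset.mul_sum, Finset.sum_sub_distrib] at hsumeq
    have hws : ∑ _i : Fin n, s / (n : ℝ) = s := by
      have hn0 : (0 : ℝ) < n := by linarith
      rw [Finset.sum_const, Finset.card_univ, Fintype.card_fin, nsmul_eq_mul]
      field_simp
    rw [hws] at hsumeq
    nlinarith [mul_le_mul_of_nonneg_left hy.2.2.1 hρ0.le, hsumeq]
  have hn1 : (1 : ℝ) ≤ n := le_trans hs1 hsn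
  nlinarith [sumA, keyB, hn1]

lemma Cb_minkAsym (n : ℕ) (s : ℝ) (hs1 : 1 ≤ s) (hsn : s ≤ (n : ℝ)) :
    minkAsym (Cb n s) = s := by
  have h1 : minkAsym (Cb n s) = sInf {ρ : ℝ | 0 < ρ ∧ ∃ c : EuclideanSpace ℝ (Fin n),
      Cb n s - {c} ⊆ ρ • ({c} - Cb n s)} := rfl
  rw [h1]
  refine le_antisymm (csInf_le ⟨0, fun ρ hρ => hρ.1.le⟩ (Cb_asym_mem n s hs1))
    (le_csInf ⟨s, Cb_asym_mem n s hs1⟩ (Cb_asym_lb n s hs1 hsn))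

lemma Cb_minkCentered (n : ℕ) (s : ℝ) (hs1 : 1 ≤ s) (hsn : s ≤ (n : ℝ)) :
    MinkCentered (Cb n s) := by
  unfold MinkCentered
  rw [Cb_minkAsym n s hs1 hsn]
  exact Cb_subset_smul_neg n s hs1

lemma bb_mem_polar (n : ℕ) (s : ℝ) (i0 : Fin n) :
    pt n (fun j => if j = i0 then 1 else 0) ∈ polarSet (Cb n s) := by
  intro x hx
  have : ⟪pt n (fun j => if j = i0 then 1 else 0), x⟫ = x i0 := by
    simp only [PiLp.inner_apply, RCLike.inner_apply, conj_trivial, pt_apply, ite_mul,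
      one_mul, zero_mul]
    simp only [mul_ite, mul_one, mul_zero]
    rw [Finset.sum_ite_eq' Finset.univ i0 (fun j => x j)]
    simp
  rw [this]
  exact hx.1 i0

lemma cc_mem_polar (n : ℕ) (s : ℝ) :
    pt n (fun _ => (-1 : ℝ)) ∈ polarSet (Cb n s) := by
  intro x hx
  have : ⟪pt n (fun _ => (-1 : ℝ)), x⟫ = -∑ i, x i := by
    simp only [PiLp.inner_apply, RCLike.inner_apply, conj_trivial, pt_apply, neg_mul, one_mul]
    simp only [mul_neg, mul_one]
    rw [Finset.sum_neg_distrib]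
  rw [this]
  linarith [hx.2.2.1]

lemma Cb_optCont (n : ℕ) (s : ℝ) (hs1 : 1 ≤ s) (hsn : s ≤ (n : ℝ)) :
    OptCont ((2:ℝ)⁻¹ • (Cb n s + -Cb n s))
      (((s + 1) / 2) • polarSet ((2:ℝ)⁻¹ • (polarSet (Cb n s) + -polarSet (Cb n s)))) := by
  have hlam0 : (0:ℝ) < (s + 1) / 2 := by linarith
  constructor
  · have h := part1_general (Cb n s) (Cb_minkCentered n s hs1 hsn)
    rwa [Cb_minkAsym n s hs1 hsn] at h
  · rintro ⟨ρ, hρ0, hρ1, t, hsubo⟩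
    have hn1R : (1:ℝ) ≤ (n:ℝ) := le_trans hs1 hsn
    have hn1 : 1 ≤ n := by exact_mod_cast hn1R
    set i0 : Fin n := ⟨0, by omega⟩ with hi0
    set δ : ℝ := (s - 1) / ((n : ℝ) - 1) with hδ
    set u : EuclideanSpace ℝ (Fin n) := pt n (fun j => if j = i0 then 1 else δ) with hu
    set v0 : EuclideanSpace ℝ (Fin n) := pt n (fun j => if j = i0 then -s else δ) with hv0
    set bb : EuclideanSpace ℝ (Fin n) := pt n (fun j => if j = i0 then 1 else 0) with hbb
    set cc : EuclideanSpace ℝ (Fin n) := pt n (fun _ => (-1:ℝ)) with hcc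
    set a : EuclideanSpace ℝ (Fin n) := (2:ℝ)⁻¹ • (bb + -cc) with ha
    set xw : EuclideanSpace ℝ (Fin n) := (2:ℝ)⁻¹ • (u + -v0) with hxw
    set D : Set (EuclideanSpace ℝ (Fin n)) :=
      (2:ℝ)⁻¹ • (polarSet (Cb n s) + -polarSet (Cb n s)) with hD
    -- `a` and `-a` belong to `D`
    have haD : a ∈ D := by
      rw [hD, Set.mem_smul_set]
      exact ⟨bb + -cc, Set.mem_add.2 ⟨bb, bb_mem_polar n s i0, -cc,
        Set.mem_neg.2 (by rw [neg_neg]; exact cc_mem_polar n s), rfl⟩, rfl⟩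
    have hnaD : -a ∈ D := by
      rw [hD, Set.mem_smul_set]
      refine ⟨cc + -bb, Set.mem_add.2 ⟨cc, cc_mem_polar n s, -bb,
        Set.mem_neg.2 (by rw [neg_neg]; exact bb_mem_polar n s i0), rfl⟩, ?_⟩
      rw [ha]
      module
    -- `xw` and `-xw` belong to the half difference body
    have hxwK : xw ∈ (2:ℝ)⁻¹ • (Cb n s + -Cb n s) := by
      rw [hxw, Set.mem_smul_set]
      exact ⟨u + -v0, Set.mem_add.2 ⟨u, upt_mem n s hs1 hsn i0, -v0,
        Set.mem_neg.2 (by rw [neg_neg]; exact vpt_mem n s hs1 hsn i0), rfl⟩, rfl⟩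
    have hnxwK : -xw ∈ (2:ℝ)⁻¹ • (Cb n s + -Cb n s) := by
      rw [Set.mem_smul_set]
      refine ⟨v0 + -u, Set.mem_add.2 ⟨v0, vpt_mem n s hs1 hsn i0, -u,
        Set.mem_neg.2 (by rw [neg_neg]; exact upt_mem n s hs1 hsn i0), rfl⟩, ?_⟩
      rw [hxw]
      module
    -- the key inner product value
    have hax : ⟪a, xw⟫ = (s + 1) / 2 := by
      rw [ha, hxw, real_inner_smul_left, real_inner_smul_right, PiLp.inner_apply]
      simp only [RCLike.inner_apply, conj_trivial, PiLp.add_apply, PiLp.neg_apply,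
        hu, hv0, hbb, hcc, pt_apply]
      rw [Finset.sum_eq_single i0 (fun j _ hj => by simp [hj]) (fun h => absurd (Finset.mem_univ i0) h)]
      simp
      ring
    -- extract the two covering equations
    obtain ⟨y1, hy1, t1, ht1, hyt1⟩ := Set.mem_add.1 (hsubo hxwK)
    obtain ⟨y2, hy2, t2, ht2, hyt2⟩ := Set.mem_add.1 (hsubo hnxwK)
    rw [Set.mem_singleton_iff] at ht1 ht2
    subst ht1
    rw [ht2] at hyt2
    rw [Set.mem_smul_set] at hy1 hy2
    obtain ⟨z1, hz1, rfl⟩ := hy1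
    obtain ⟨z2, hz2, rfl⟩ := hy2
    rw [Set.mem_smul_set] at hz1 hz2
    obtain ⟨p1, hp1, rfl⟩ := hz1
    obtain ⟨p2, hp2, rfl⟩ := hz2
    have hp1a : ⟪a, p1⟫ ≤ 1 := by rw [real_inner_comm]; exact hp1 a haD
    have hp2a : -⟪a, p2⟫ ≤ 1 := by
      have := hp2 (-a) hnaD
      rw [real_inner_comm, inner_neg_left] at this
      linarith
    -- turn the vector equations into scalar equations
    have heq1 : (s + 1) / 2 = ρ * ((s + 1) / 2 * ⟪a, p1⟫) + ⟪a, t1⟫ := by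
      have h := congrArg (fun z : EuclideanSpace ℝ (Fin n) => ⟪a, z⟫) hyt1
      simp only [inner_add_right, real_inner_smul_right] at h
      rw [hax] at h
      linarith [h]
    have heq2 : -((s + 1) / 2) = ρ * ((s + 1) / 2 * ⟪a, p2⟫) + ⟪a, t1⟫ := by
      have h := congrArg (fun z : EuclideanSpace ℝ (Fin n) => ⟪a, z⟫) hyt2
      simp only [inner_add_right, inner_neg_right, real_inner_smul_right] at h
      rw [hax] at h
      linarith [h]
    have hXY : ⟪a, p1⟫ - ⟪a, p2⟫ ≤ 2 := by linarith
    have hrl : (0:ℝ) ≤ ρ * ((s + 1) / 2) := by positivity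
    have hmul := mul_le_mul_of_nonneg_left hXY hrl
    nlinarith [heq1, heq2, hmul, mul_pos (sub_pos.2 hρ1) hlam0]

lemma Cb_zero_mem_interior (n : ℕ) (s : ℝ) (hs1 : 1 ≤ s) : 0 ∈ interior (Cb n s) :=
  mem_interior.2 ⟨Metric.ball 0 ((n : ℝ) + 1)⁻¹, Cb_ball_subset n s hs1,
    Metric.isOpen_ball, Metric.mem_ball_self (by positivity)⟩

theorem stmt_7 (n : ℕ) :
    (∀ C : Set (EuclideanSpace ℝ (Fin n)), IsCompact C → Convex ℝ C →
      (interior C).Nonempty → 0 ∈ interior C → MinkCentered C →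
      (2:ℝ)⁻¹ • (C + -C) ⊆
        ((minkAsym C + 1) / 2) • polarSet ((2:ℝ)⁻¹ • (polarSet C + -polarSet C))) ∧
    (∀ s : ℝ, 1 ≤ s → s ≤ (n : ℝ) →
      ∃ C : Set (EuclideanSpace ℝ (Fin n)), IsCompact C ∧ Convex ℝ C ∧
        (interior C).Nonempty ∧ 0 ∈ interior C ∧ MinkCentered C ∧ minkAsym C = s ∧
        OptCont ((2:ℝ)⁻¹ • (C + -C))
          (((s + 1) / 2) • polarSet ((2:ℝ)⁻¹ • (polarSet C + -polarSet C)))) := by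
  constructor
  · intro C _ _ _ _ hcent
    exact part1_general C hcent
  · intro s hs1 hsn
    exact ⟨Cb n s, Cb_isCompact n s hs1, Cb_convex n s,
      ⟨0, Cb_zero_mem_interior n s hs1⟩, Cb_zero_mem_interior n s hs1,
      Cb_minkCentered n s hs1 hsn, Cb_minkAsym n s hs1 hsn, Cb_optCont n s hs1 hsn⟩
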